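/- Fix c > 0 and a nonnegative integer s, and let Y be the sum of t independent copies of X(c, s), the number of generation-s nodes of the Galton–Watson tree T_c. Let K, γ > 0 and let BAD be an event (on the same probability space) with P[BAD] ≤ K·e^{−tγ}. Then there exist positive constants k' and κ (depending on K, γ, c, s but not on t or the event) such that E[Y · 1_{BAD}] ≤ k'·t·e^{−tκ}. -/

import Mathlib

open FirstOrder MeasureTheory
open scoped Classical

/-! ### Rooted trees -/

/-- A rooted tree: a set of finite sequences of naturals (addresses of vertices),
containing the root `[]` and closed under passing to the parent (`List.dropLast`). -/
structure RTree where
  carrier : Set (List ℕ)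
  root_mem : [] ∈ carrier
  dropLast_mem : ∀ v ∈ carrier, v.dropLast ∈ carrier

namespace RTree

/-- The first-order language of rooted trees: a constant symbol `R` (the root) and a
unary function symbol `π` (the parent function). -/
def treeLang : FirstOrder.Language where
  Functions := fun n => match n with
    | 0 => Unit
    | 1 => Unit
    | _ => Empty
  Relations := fun _ => Empty

/-- The type of vertices of a rooted tree. -/
def V (T : RTree) : Type := {v : List ℕ // v ∈ T.carrier}

/-- The root, as a vertex. -/
def rootV (T : RTree) : T.V := ⟨[], T.root_mem⟩

/-- The parent of a vertex (the root is its own parent). -/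
def parentV (T : RTree) (v : T.V) : T.V := ⟨v.1.dropLast, T.dropLast_mem _ v.2⟩

/-- A rooted tree as a structure for the language of rooted trees: the constant is
interpreted as the root and the unary function as the parent function (fixing the
root, where the parent is undefined). -/
noncomputable instance treeStructure (T : RTree) : treeLang.Structure T.V where
  funMap {n} f x :=
    match n, f, x with
    | 0, _, _ => rootV T
    | 1, _, x => parentV T (x 0)
  RelMap {n} r := nomatch r

end RTree

namespace FirstOrder.Language

/-- The quantifier depth of a first-order formula: the depth of nesting of its
quantifiers. -/
def BoundedFormula.qdepth {L : FirstOrder.Language} {α : Type*} :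
    ∀ {n}, L.BoundedFormula α n → ℕ
  | _, .falsum => 0
  | _, .equal _ _ => 0
  | _, .rel _ _ => 0
  | _, .imp f g => max f.qdepth g.qdepth
  | _, .all f => f.qdepth + 1

end FirstOrder.Language

namespace RTree

/-- Two rooted trees are `≡ₖ`-equivalent if they agree on all first-order sentences of
quantifier depth at most `k`. -/
def TreeEquiv (k : ℕ) (T T' : RTree) : Prop :=
  ∀ A : treeLang.Sentence, A.qdepth ≤ k → (T.V ⊨ A ↔ T'.V ⊨ A)

/-- `≡ₖ` as an equivalence relation (setoid) on rooted trees. -/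
def treeSetoid (k : ℕ) : Setoid RTree where
  r := TreeEquiv k
  iseqv := ⟨fun _ _ _ => Iff.rfl, fun h A hA => (h A hA).symm,
    fun h h' A hA => (h A hA).trans (h' A hA)⟩

/-- `Σₖ`: the set of `≡ₖ`-equivalence classes of rooted trees. -/
def TreeClass (k : ℕ) : Type := Quotient (treeSetoid k)

/-- The Ehrenfeucht value of a rooted tree: its `≡ₖ`-equivalence class. -/
def EV (k : ℕ) (T : RTree) : TreeClass k := Quotient.mk (treeSetoid k) T

/-- `T(v)`: the subtree of `T` consisting of `v` and all its descendants, rooted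
at `v`. -/
def subtreeAt (T : RTree) (v : List ℕ) (hv : v ∈ T.carrier) : RTree where
  carrier := {w | v ++ w ∈ T.carrier}
  root_mem := by simpa using hv
  dropLast_mem := fun w hw => by
    rcases eq_or_ne w [] with h | h
    · subst h; simpa using hv
    · have h2 := T.dropLast_mem _ hw
      rwa [List.dropLast_append_of_ne_nil h] at h2

/-- The number of elements of `S`, truncated at `k` (so the value `k` means
"at least `k`", i.e. `ω`). -/
noncomputable def truncCount (k : ℕ) (S : Set ℕ) : ℕ := (min (k : ℕ∞) S.encard).toNat

/-- The truncated number of rootchildren `v` of `T` with `EV[T(v)] = j`; a value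
`< k` is the exact count, while the value `k` stands for `ω`, i.e. "at least `k`". -/
noncomputable def childClassCount (k : ℕ) (T : RTree) (j : TreeClass k) : ℕ :=
  truncCount k {i : ℕ | ∃ h : [i] ∈ T.carrier, EV k (T.subtreeAt [i] h) = j}

end RTree
namespace RTree

/-- Join a collection of rooted trees below a common new root. -/
def joinTree (f : ℕ → Option RTree) : RTree where
  carrier := {[]} ∪ {l | ∃ i T w, f i = some T ∧ w ∈ T.carrier ∧ l = i :: w}
  root_mem := Or.inl rfl
  dropLast_mem := by
    rintro v (rfl | ⟨i, T, w, hf, hw, rfl⟩)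
    · exact Or.inl rfl
    · cases w with
      | nil => exact Or.inl (by simp)
      | cons a as =>
        exact Or.inr ⟨i, T, (a :: as).dropLast, hf, T.dropLast_mem _ hw, rfl⟩

/-- The recursion function `Γ`: given truncated counts `a j` of rootchildren of each
Ehrenfeucht class `j` (counts `≥ k` being identified with `ω`), it returns the
Ehrenfeucht value of any (equivalently, of a canonical) tree whose root has, for each
`j`, `a j` rootchildren whose subtrees lie in class `j`. -/
noncomputable def recursionFun (k : ℕ) [Fintype (TreeClass k)]
    (a : TreeClass k → ℕ) : TreeClass k :=
  EV k (joinTree (fun n =>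
    if h : n.unpair.1 < Fintype.card (TreeClass k) then
      if n.unpair.2 < min (a ((Fintype.equivFin (TreeClass k)).symm ⟨n.unpair.1, h⟩)) k then
        some (Quotient.out ((Fintype.equivFin (TreeClass k)).symm ⟨n.unpair.1, h⟩))
      else none
    else none))

/-- `P[n = u]` for `n` a `Poisson(lam)` variable truncated at `ω = k`: for `u < k` this
is `e^{-lam} lam^u / u!`, and for `u = k` (representing `ω`) it is the remaining mass
`1 - Σ_{v<k} e^{-lam} lam^v / v!`. -/
noncomputable def poisTrunc (lam : ℝ) (k : ℕ) (u : ℕ) : ℝ :=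
  if u < k then Real.exp (-lam) * lam ^ u / u.factorial
  else 1 - ∑ v ∈ Finset.range k, Real.exp (-lam) * lam ^ v / v.factorial

/-- The map `Ψ_c : D → D`: the root is given a `Poisson(c)` number of children, each
child independently receives a class `j` with probability `x j`; the (truncated) counts
`n_j` are then independent (truncated) `Poisson(c x_j)` variables, and `Ψ_c(x) j` is the
probability that `Γ(n⃗) = j`. -/
noncomputable def PsiMap (k : ℕ) [Fintype (TreeClass k)] (c : ℝ)
    (x : TreeClass k → ℝ) : TreeClass k → ℝ := fun j =>
  ∑ a : TreeClass k → Fin (k + 1),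
    (if recursionFun k (fun i => (a i : ℕ)) = j then ∏ i, poisTrunc (c * x i) k (a i)
     else 0)

/-- `D`: the simplex of probability distributions over `Σₖ`. -/
def simplexD (k : ℕ) [Fintype (TreeClass k)] : Set (TreeClass k → ℝ) :=
  {x | (∀ j, 0 ≤ x j) ∧ ∑ j, x j = 1}

/-- The total variation distance `TV(x,y) = (1/2) Σ_j |x_j - y_j|`. -/
noncomputable def tvDist {ι : Type*} [Fintype ι] (x y : ι → ℝ) : ℝ :=
  (∑ j, |x j - y j|) / 2

/-- The Euclidean metric `ρ` on `ℝ^m`. -/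
noncomputable def euclDist {ι : Type*} [Fintype ι] (x y : ι → ℝ) : ℝ :=
  Real.sqrt (∑ j, (x j - y j) ^ 2)

end RTree
namespace RTree

/-! ### The Galton–Watson tree -/

/-- The Galton–Watson tree built from a family `ω` of offspring numbers indexed by the
potential vertices: vertex `v ++ [i]` is present iff `v` is present and `i < ω v`, i.e.
the vertex `v` has exactly `ω v` children (when `ω` is i.i.d. `Poisson(c)`, this is the
Galton–Watson tree with `Poisson(c)` offspring distribution). -/
def gwTree (ω : List ℕ → ℕ) : RTree where
  carrier := {v | ∀ w : List ℕ, w <+: v → ∀ h : w ≠ [], w.getLast h < ω w.dropLast}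
  root_mem := fun w hw h => absurd (List.prefix_nil.mp hw) h
  dropLast_mem := fun v hv w hw h => hv w (hw.trans (List.dropLast_prefix v)) h

/-- `μ` is the distribution of an i.i.d. family of `Poisson(c)` random variables
indexed by `List ℕ`: it is a probability measure whose finite-dimensional marginals
are products of Poisson distributions.  (Pushing such a `μ` forward by `gwTree`
yields the distribution `P_c` of the Galton–Watson tree `T_c`.) -/
def IsPoissonProduct (c : NNReal) (μ : Measure (List ℕ → ℕ)) : Prop :=
  IsProbabilityMeasure μ ∧
    ∀ (S : Finset (List ℕ)) (f : List ℕ → ℕ),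
      μ {ω | ∀ v ∈ S, ω v = f v} = ∏ v ∈ S, ProbabilityTheory.poissonPMF c (f v)

/-! ### Truncations, depth, universality, isomorphism -/

/-- `T|_s`: the truncation of `T` to generations `0, …, s`. -/
def truncAt (T : RTree) (s : ℕ) : RTree where
  carrier := {v ∈ T.carrier | v.length ≤ s}
  root_mem := ⟨T.root_mem, by simp⟩
  dropLast_mem := fun v hv =>
    ⟨T.dropLast_mem v hv.1, by
      have h1 := hv.2
      have h2 : v.dropLast.length = v.length - 1 := List.length_dropLast
      omega⟩

/-- The depth of a rooted tree. -/
noncomputable def treeDepth (T : RTree) : ℕ :=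
  sSup {n | ∃ v ∈ T.carrier, v.length = n}

/-- Isomorphism of rooted trees: a bijection of the vertex sets preserving the root
and the parent function. -/
def RTreeIso (T T' : RTree) : Prop :=
  ∃ e : T.V ≃ T'.V, e (rootV T) = rootV T' ∧ ∀ v, e (parentV T v) = parentV T' (e v)

/-- Given `k`, a rooted tree `T` is `s`-universal if its `k`-Ehrenfeucht value is
completely determined by `T|_s`: every tree whose `s`-truncation is isomorphic to that
of `T` has the same Ehrenfeucht value. -/
def sUniversal (k s : ℕ) (T : RTree) : Prop :=
  ∀ T' : RTree, RTreeIso (truncAt T' s) (truncAt T s) → EV k T' = EV k T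

end RTree
namespace RTree

/-! ### Extensions of a fixed tree and labelled recursion -/

/-- The offspring variables attached to the descendants of `v`. -/
def shiftω (v : List ℕ) (ω : List ℕ → ℕ) : List ℕ → ℕ := fun u => ω (v ++ u)

/-- `Ext(T₀)`: the random tree obtained from a fixed tree `T₀` of depth at most `s₀` by
growing, from each of its nodes at depth `s₀`, an independent Galton–Watson tree
truncated at depth `D₀` (the trees being independent since they use disjoint families
of offspring variables). -/
def extTree (T₀ : RTree) (s₀ D₀ : ℕ) (ω : List ℕ → ℕ) : RTree where
  carrier := T₀.carrier ∪
    {l | ∃ v w, v ∈ T₀.carrier ∧ v.length = s₀ ∧ w ∈ (gwTree (shiftω v ω)).carrier ∧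
      w.length ≤ D₀ ∧ l = v ++ w}
  root_mem := Or.inl T₀.root_mem
  dropLast_mem := by
    rintro l (hl | ⟨v, w, hv, hvl, hw, hwl, rfl⟩)
    · exact Or.inl (T₀.dropLast_mem _ hl)
    · cases w with
      | nil => exact Or.inl (by simpa using T₀.dropLast_mem _ hv)
      | cons a as =>
        refine Or.inr ⟨v, (a :: as).dropLast, hv, hvl,
          (gwTree (shiftω v ω)).dropLast_mem _ hw, ?_, ?_⟩
        · have : (a :: as).dropLast.length = (a :: as).length - 1 := List.length_dropLast
          omega
        · rw [List.dropLast_append_of_ne_nil (List.cons_ne_nil a as)]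

/-- Given a tree `T` whose nodes at depth `s` carry labels (classes in `Σₖ`) given by
`lab`, `upVal k T lab r v` computes the value of the node `v` lying `r` levels above
the labelled generation, by repeatedly applying the recursion function `Γ` to the
(truncated) counts of the values of its children. -/
noncomputable def upVal (k : ℕ) [Fintype (TreeClass k)] (T : RTree)
    (lab : List ℕ → TreeClass k) : ℕ → List ℕ → TreeClass k
  | 0, v => lab v
  | r + 1, v => recursionFun k (fun j =>
      truncCount k {i : ℕ | v ++ [i] ∈ T.carrier ∧ upVal k T lab r (v ++ [i]) = j})

instance (k : ℕ) : MeasurableSpace (TreeClass k) := ⊤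

/-- `π` is the joint distribution of an i.i.d. family of `Poisson(c)` offspring
variables indexed by `List ℕ` together with an independent i.i.d. family of
`Σₖ`-valued labels with distribution `x`, indexed by `List ℕ`. -/
def IsLabeledPoisson (k : ℕ) (c : NNReal) (x : TreeClass k → ℝ)
    (π : Measure ((List ℕ → ℕ) × (List ℕ → TreeClass k))) : Prop :=
  IsProbabilityMeasure π ∧
    ∀ (S S' : Finset (List ℕ)) (f : List ℕ → ℕ) (g : List ℕ → TreeClass k),
      π {p | (∀ v ∈ S, p.1 v = f v) ∧ (∀ v ∈ S', p.2 v = g v)} =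
        (∏ v ∈ S, ProbabilityTheory.poissonPMF c (f v)) *
          ∏ v ∈ S', ENNReal.ofReal (x (g v))

/-- `Ψ_c^s(T₀, x⃗)`: the distribution of the Ehrenfeucht value of the root obtained by
growing `Ext(T₀)` (of depth at most `s = s₀ + D₀`), assigning to each node at depth `s`
an independent label with distribution `x⃗`, and applying the recursion function `Γ`
upward through the generations; here `π` is the joint distribution of the offspring
variables and the labels. -/
noncomputable def psiExt (k : ℕ) [Fintype (TreeClass k)] (T₀ : RTree) (s₀ D₀ : ℕ)
    (π : Measure ((List ℕ → ℕ) × (List ℕ → TreeClass k))) : TreeClass k → ℝ :=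
  fun j => (π {p | upVal k (extTree T₀ s₀ D₀ p.1) p.2 (s₀ + D₀) [] = j}).toReal

end RTree
namespace GWAux

open MeasureTheory Real
open scoped ENNReal

/-- Product over a pi type of a tsum, in `ℝ≥0∞`. -/
lemma tsum_pi_prod : ∀ (s : ℕ) (F : Fin s → ℕ → ℝ≥0∞),
    ∑' g : Fin s → ℕ, ∏ j, F j (g j) = ∏ j, ∑' n, F j n := by
  intro s
  induction s with
  | zero =>
    intro F
    rw [tsum_eq_single (fun j => 0) (fun b hb => absurd (Subsingleton.elim b _) hb)]
    simp
  | succ n ih =>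
    intro F
    rw [← (Fin.consEquiv (fun _ : Fin (n+1) => ℕ)).tsum_eq]
    have h1 : ∀ p : ℕ × (Fin n → ℕ),
        (∏ j, F j ((Fin.consEquiv (fun _ : Fin (n+1) => ℕ)) p j))
          = F 0 p.1 * ∏ j : Fin n, F j.succ (p.2 j) := by
      intro p
      rw [Fin.prod_univ_succ]
      simp [Fin.consEquiv]
    calc ∑' p : ℕ × (Fin n → ℕ), ∏ j, F j ((Fin.consEquiv (fun _ : Fin (n+1) => ℕ)) p j)
        = ∑' p : ℕ × (Fin n → ℕ), F 0 p.1 * ∏ j : Fin n, F j.succ (p.2 j) :=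
          tsum_congr h1
      _ = ∑' (a : ℕ), ∑' (g : Fin n → ℕ), F 0 a * ∏ j : Fin n, F j.succ (g j) :=
          ENNReal.tsum_prod'
      _ = ∑' (a : ℕ), F 0 a * ∑' (g : Fin n → ℕ), ∏ j : Fin n, F j.succ (g j) := by
          simp [ENNReal.tsum_mul_left]
      _ = (∑' (a : ℕ), F 0 a) * ∑' (g : Fin n → ℕ), ∏ j : Fin n, F j.succ (g j) := by
          rw [ENNReal.tsum_mul_right]
      _ = ∏ j, ∑' n_1, F j n_1 := by
          rw [ih (fun j => F j.succ), Fin.prod_univ_succ]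

lemma pow_le_fac_exp (x : ℝ) (hx : 0 ≤ x) (n : ℕ) :
    x ^ n ≤ n.factorial * Real.exp x := by
  have h1 : x ^ n / n.factorial ≤ Real.exp x := by
    calc x ^ n / n.factorial ≤ ∑ i ∈ Finset.range (n+1), x ^ i / i.factorial := by
          refine Finset.single_le_sum (f := fun i => x ^ i / i.factorial) ?_ ?_
          · intro i _; positivity
          · simp
      _ ≤ Real.exp x := Real.sum_le_exp_of_nonneg hx _
  have hfac : (0:ℝ) < n.factorial := by positivity
  calc x ^ n = (x ^ n / n.factorial) * n.factorial := by field_simp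
    _ ≤ Real.exp x * n.factorial := mul_le_mul_of_nonneg_right h1 hfac.le
    _ = n.factorial * Real.exp x := by ring

/-- Tail of the exponential series, in `ℝ≥0∞`. -/
lemma tail_le (c : ℝ) (hc : 0 ≤ c) (m : ℕ) :
    ∑' n : ℕ, (if m ≤ n then ENNReal.ofReal (c ^ n / n.factorial) else 0)
      ≤ ENNReal.ofReal (Real.exp c * (c ^ m / m.factorial)) := by
  have hinj : Function.Injective (fun k : ℕ => k + m) := fun a b h => by
    simpa using h
  have hsupp : Function.support
      (fun x => (if m ≤ x then ENNReal.ofReal (c ^ x / x.factorial) else 0))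
        ⊆ Set.range (fun k : ℕ => k + m) := by
    intro x hx
    by_contra hc2
    have : ¬ m ≤ x := by
      intro h
      exact hc2 ⟨x - m, by simp; omega⟩
    simp [this] at hx
  rw [← hinj.tsum_eq hsupp]
  have hterm : ∀ k : ℕ,
      (if m ≤ k + m then ENNReal.ofReal (c ^ (k + m) / (k + m).factorial) else 0)
        ≤ ENNReal.ofReal (c ^ m / m.factorial) * ENNReal.ofReal (c ^ k / k.factorial) := by
    intro k
    rw [if_pos (by omega), ← ENNReal.ofReal_mul (by positivity)]
    apply ENNReal.ofReal_le_ofReal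
    have hfac : (m.factorial : ℝ) * k.factorial ≤ (k + m).factorial := by
      have := Nat.factorial_mul_factorial_dvd_factorial_add m k
      have h2 := Nat.le_of_dvd (Nat.factorial_pos (m + k)) this
      have h3 : ((m.factorial * k.factorial : ℕ) : ℝ) ≤ ((m + k).factorial : ℕ) := by
        exact_mod_cast h2
      rw [Nat.add_comm m k] at h3
      push_cast at h3
      linarith
    have hfk : (0:ℝ) < (k + m).factorial := by positivity
    have hfm : (0:ℝ) < m.factorial := by positivity
    have hfkk : (0:ℝ) < k.factorial := by positivity
    rw [div_le_iff₀ hfk]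
    calc c ^ (k + m) = c ^ m * c ^ k := by rw [pow_add]; ring
      _ ≤ (c ^ m / m.factorial * (c ^ k / k.factorial)) * (m.factorial * k.factorial) := by
          field_simp
          exact le_rfl
      _ ≤ (c ^ m / m.factorial * (c ^ k / k.factorial)) * (k + m).factorial := by
          apply mul_le_mul_of_nonneg_left hfac
          positivity
  calc ∑' k : ℕ, (if m ≤ k + m then ENNReal.ofReal (c ^ (k + m) / (k + m).factorial) else 0)
      ≤ ∑' k : ℕ, ENNReal.ofReal (c ^ m / m.factorial) * ENNReal.ofReal (c ^ k / k.factorial) :=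
        ENNReal.tsum_le_tsum hterm
    _ = ENNReal.ofReal (c ^ m / m.factorial) * ∑' k : ℕ, ENNReal.ofReal (c ^ k / k.factorial) :=
        ENNReal.tsum_mul_left
    _ ≤ ENNReal.ofReal (c ^ m / m.factorial) * ENNReal.ofReal (Real.exp c) := by
        gcongr
        rw [← ENNReal.ofReal_tsum_of_nonneg (fun k => by positivity)
          (Real.summable_pow_div_factorial c)]
        apply ENNReal.ofReal_le_ofReal
        refine Real.tsum_le_of_sum_range_le (fun n => by positivity) ?_
        exact fun n => Real.sum_le_exp_of_nonneg hc n
    _ = ENNReal.ofReal (Real.exp c * (c ^ m / m.factorial)) := by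
        rw [← ENNReal.ofReal_mul (by positivity)]
        ring_nf

/-- The probability that a `Poisson(c)` variable is at least `a + 1`. -/
noncomputable def q (c : ℝ) (a : ℕ) : ℝ≥0∞ :=
  ∑' n : ℕ, if a + 1 ≤ n then (ProbabilityTheory.poissonPMF c.toNNReal n : ℝ≥0∞) else 0

lemma poissonPMF_le (c : ℝ) (hc : 0 < c) (n : ℕ) :
    (ProbabilityTheory.poissonPMF c.toNNReal n : ℝ≥0∞)
      ≤ ENNReal.ofReal (c ^ n / n.factorial) := by
  have hcoe : ((c.toNNReal : ℝ)) = c := Real.coe_toNNReal _ hc.le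
  rw [show (ProbabilityTheory.poissonPMF c.toNNReal n : ℝ≥0∞)
      = ENNReal.ofReal (ProbabilityTheory.poissonPMFReal c.toNNReal n) from rfl]
  apply ENNReal.ofReal_le_ofReal
  unfold ProbabilityTheory.poissonPMFReal
  rw [hcoe]
  have he : Real.exp (-c) ≤ 1 := by
    have := Real.exp_le_exp.2 (neg_nonpos.2 hc.le)
    simpa using this
  have h0 : (0:ℝ) ≤ c ^ n / n.factorial := by positivity
  have he0 : (0:ℝ) < Real.exp (-c) := Real.exp_pos _
  calc Real.exp (-c) * c ^ n / n.factorial = Real.exp (-c) * (c ^ n / n.factorial) := by ring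
    _ ≤ 1 * (c ^ n / n.factorial) := mul_le_mul_of_nonneg_right he h0
    _ = c ^ n / n.factorial := one_mul _

lemma q_le (c : ℝ) (hc : 0 < c) (a : ℕ) :
    q c a ≤ ENNReal.ofReal (Real.exp c * (c ^ (a+1) / (a+1).factorial)) := by
  refine le_trans ?_ (tail_le c hc.le (a+1))
  refine ENNReal.tsum_le_tsum fun n => ?_
  split_ifs
  · exact poissonPMF_le c hc n
  · exact le_rfl

lemma tsum_succ (h : ℕ → ℝ≥0∞) (h0 : h 0 = 0) : (∑' n : ℕ, h (n+1)) = ∑' n, h n := by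
  have hinj : Function.Injective (fun n : ℕ => n + 1) := fun a b hab => by simpa using hab
  refine hinj.tsum_eq ?_
  intro x hx
  rcases Nat.eq_zero_or_pos x with rfl | hpos
  · exact absurd h0 hx
  · exact ⟨x - 1, by simp; omega⟩

lemma q_sum_le (c : ℝ) (hc : 0 < c) :
    (∑' a : ℕ, q c a) ≤ ENNReal.ofReal (Real.exp c * (Real.exp c * c)) := by
  calc ∑' a : ℕ, q c a
      ≤ ∑' a : ℕ, ENNReal.ofReal (Real.exp c)
          * ENNReal.ofReal (c ^ (a+1) / (a+1).factorial) := by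
        refine ENNReal.tsum_le_tsum fun a => (q_le c hc a).trans (le_of_eq ?_)
        rw [← ENNReal.ofReal_mul (Real.exp_pos c).le]
    _ = ENNReal.ofReal (Real.exp c)
          * ∑' a : ℕ, ENNReal.ofReal (c ^ (a+1) / (a+1).factorial) := ENNReal.tsum_mul_left
    _ ≤ ENNReal.ofReal (Real.exp c) * ENNReal.ofReal (Real.exp c * (c ^ 1 / (1:ℕ).factorial)) := by
        gcongr
        have h1 := tsum_succ (fun n => if 1 ≤ n then ENNReal.ofReal (c ^ n / n.factorial) else 0)
          (by simp)
        calc ∑' a : ℕ, ENNReal.ofReal (c ^ (a+1) / (a+1).factorial)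
            = ∑' n : ℕ, (if 1 ≤ n then ENNReal.ofReal (c ^ n / n.factorial) else 0) := by
              rw [← h1]
              exact tsum_congr fun a => by beta_reduce; rw [if_pos (by omega)]
          _ ≤ _ := tail_le c hc.le 1
    _ = ENNReal.ofReal (Real.exp c * (Real.exp c * c)) := by
        rw [← ENNReal.ofReal_mul (Real.exp_pos c).le]
        norm_num
    
lemma q_tail_le (c : ℝ) (hc : 0 < c) (t : ℕ) :
    (∑' a : ℕ, if t + 1 ≤ a then q c a else 0)
      ≤ ENNReal.ofReal (Real.exp c * (Real.exp c * (c ^ (t+2) / (t+2).factorial))) := by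
  calc ∑' a : ℕ, (if t + 1 ≤ a then q c a else 0)
      ≤ ∑' a : ℕ, ENNReal.ofReal (Real.exp c)
          * (if t + 1 ≤ a then ENNReal.ofReal (c ^ (a+1) / (a+1).factorial) else 0) := by
        refine ENNReal.tsum_le_tsum fun a => ?_
        split_ifs with h
        · exact (q_le c hc a).trans (le_of_eq (by
            rw [← ENNReal.ofReal_mul (Real.exp_pos c).le]))
        · simp
    _ = ENNReal.ofReal (Real.exp c)
          * ∑' a : ℕ, (if t + 1 ≤ a then ENNReal.ofReal (c ^ (a+1) / (a+1).factorial) else 0) :=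
        ENNReal.tsum_mul_left
    _ ≤ ENNReal.ofReal (Real.exp c)
          * ENNReal.ofReal (Real.exp c * (c ^ (t+2) / (t+2).factorial)) := by
        gcongr
        have h1 := tsum_succ
          (fun n => if t + 2 ≤ n then ENNReal.ofReal (c ^ n / n.factorial) else 0) (by simp)
        calc ∑' a : ℕ, (if t + 1 ≤ a then ENNReal.ofReal (c ^ (a+1) / (a+1).factorial) else 0)
            = ∑' n : ℕ, (if t + 2 ≤ n then ENNReal.ofReal (c ^ n / n.factorial) else 0) := by
              rw [← h1]
              refine tsum_congr fun a => ?_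
              beta_reduce
              by_cases h : t + 1 ≤ a
              · rw [if_pos h, if_pos (by omega)]
              · rw [if_neg h, if_neg (by omega)]
          _ ≤ _ := tail_le c hc.le (t+2)
    _ = _ := by
        rw [← ENNReal.ofReal_mul (Real.exp_pos c).le]

lemma prod_pick_le {s : ℕ} (j : Fin s) (X : Fin s → ℝ≥0∞) (A B : ℝ≥0∞)
    (hA : X j ≤ A) (hB : ∀ j', X j' ≤ B) : ∏ j', X j' ≤ A * B ^ (s-1) := by
  rw [← Finset.mul_prod_erase Finset.univ X (Finset.mem_univ j)]
  refine mul_le_mul' hA ?_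
  calc ∏ x ∈ Finset.univ.erase j, X x ≤ ∏ _x ∈ Finset.univ.erase j, B :=
        Finset.prod_le_prod' (fun i _ => hB i)
    _ = B ^ (s-1) := by
        rw [Finset.prod_const, Finset.card_erase_of_mem (Finset.mem_univ j)]
        simp

/-- The key splitting estimate for the sum over digit strings. -/
lemma min_sum_le (c : ℝ) (s t : ℕ) (ε : ℝ≥0∞) :
    ∑' g : Fin s → ℕ, min (∏ j, q c (g j)) ε
      ≤ ε * (((t+1 : ℕ) : ℝ≥0∞))^s
        + (s : ℝ≥0∞) * ((∑' a : ℕ, if t + 1 ≤ a then q c a else 0)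
            * (∑' a : ℕ, q c a)^(s-1)) := by
  have hsplit : ∀ g : Fin s → ℕ, min (∏ j, q c (g j)) ε ≤
      (ε * ∏ j, (if g j ≤ t then (1:ℝ≥0∞) else 0))
      + ∑ j : Fin s, ∏ j', (if j' = j then (if t + 1 ≤ g j' then q c (g j') else 0)
          else q c (g j')) := by
    intro g
    by_cases hall : ∀ j, g j ≤ t
    · have h1 : ∏ j, (if g j ≤ t then (1:ℝ≥0∞) else 0) = 1 :=
        Finset.prod_eq_one (fun j _ => if_pos (hall j))
      refine le_trans ?_ (self_le_add_right _ _)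
      rw [h1, mul_one]
      exact min_le_right _ _
    · push_neg at hall
      obtain ⟨j0, hj0⟩ := hall
      refine le_trans ?_ (self_le_add_left _ _)
      calc min (∏ j, q c (g j)) ε ≤ ∏ j, q c (g j) := min_le_left _ _
        _ = ∏ j', (if j' = j0 then (if t + 1 ≤ g j' then q c (g j') else 0)
              else q c (g j')) := by
            refine Finset.prod_congr rfl fun j' _ => ?_
            by_cases h : j' = j0
            · subst h
              rw [if_pos rfl, if_pos (by omega)]
            · rw [if_neg h]
        _ ≤ _ := Finset.single_le_sum
              (f := fun j => ∏ j', (if j' = j then (if t + 1 ≤ g j' then q c (g j') else 0)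
                else q c (g j'))) (fun j _ => zero_le) (Finset.mem_univ j0)
  calc ∑' g : Fin s → ℕ, min (∏ j, q c (g j)) ε
      ≤ ∑' g : Fin s → ℕ, ((ε * ∏ j, (if g j ≤ t then (1:ℝ≥0∞) else 0))
          + ∑ j : Fin s, ∏ j', (if j' = j then (if t + 1 ≤ g j' then q c (g j') else 0)
              else q c (g j'))) := ENNReal.tsum_le_tsum hsplit
    _ = (∑' g : Fin s → ℕ, ε * ∏ j, (if g j ≤ t then (1:ℝ≥0∞) else 0))
          + ∑' g : Fin s → ℕ, ∑ j : Fin s, ∏ j',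
            (if j' = j then (if t + 1 ≤ g j' then q c (g j') else 0) else q c (g j')) :=
        ENNReal.tsum_add
    _ = ε * (∑' g : Fin s → ℕ, ∏ j, (if g j ≤ t then (1:ℝ≥0∞) else 0))
          + ∑ j : Fin s, ∑' g : Fin s → ℕ, ∏ j',
            (if j' = j then (if t + 1 ≤ g j' then q c (g j') else 0) else q c (g j')) := by
        rw [ENNReal.tsum_mul_left, Summable.tsum_finsetSum (fun j _ => ENNReal.summable)]
    _ ≤ ε * (((t+1 : ℕ) : ℝ≥0∞))^s
          + (s : ℝ≥0∞) * ((∑' a : ℕ, if t + 1 ≤ a then q c a else 0)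
              * (∑' a : ℕ, q c a)^(s-1)) := by
        gcongr
        · -- first factor
          rw [tsum_pi_prod s (fun _ n => if n ≤ t then (1:ℝ≥0∞) else 0)]
          have hcount : ∑' n : ℕ, (if n ≤ t then (1:ℝ≥0∞) else 0) = ((t+1 : ℕ) : ℝ≥0∞) := by
            rw [tsum_eq_sum (s := Finset.range (t+1)) (fun n hn => if_neg (by simpa using hn))]
            rw [Finset.sum_congr rfl (fun n hn => if_pos (by
              simpa [Nat.lt_succ_iff] using hn))]
            simp
          rw [Finset.prod_congr rfl (fun j _ => hcount), Finset.prod_const]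
          simp
        · -- second part
          calc ∑ j : Fin s, ∑' g : Fin s → ℕ, ∏ j',
                (if j' = j then (if t + 1 ≤ g j' then q c (g j') else 0) else q c (g j'))
              ≤ ∑ _j : Fin s, ((∑' a : ℕ, if t + 1 ≤ a then q c a else 0)
                  * (∑' a : ℕ, q c a)^(s-1)) := by
                refine Finset.sum_le_sum fun j _ => ?_
                rw [tsum_pi_prod s (fun j' n =>
                  if j' = j then (if t + 1 ≤ n then q c n else 0) else q c n)]
                refine prod_pick_le j _ _ _ ?_ ?_
                · exact le_of_eq (tsum_congr fun n => if_pos rfl)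
                · intro j'
                  refine ENNReal.tsum_le_tsum fun n => ?_
                  by_cases h : j' = j
                  · rw [if_pos h]
                    split_ifs
                    · exact le_rfl
                    · exact zero_le
                  · rw [if_neg h]
            _ = (s : ℝ≥0∞) * ((∑' a : ℕ, if t + 1 ≤ a then q c a else 0)
                  * (∑' a : ℕ, q c a)^(s-1)) := by
                rw [Finset.sum_const, Finset.card_univ, Fintype.card_fin, nsmul_eq_mul]

end GWAux

namespace GWAux

open MeasureTheory Real RTree
open scoped ENNReal

lemma measurable_E (i : ℕ) (w : List ℕ) :
    MeasurableSet {ω : List ℕ → ℕ | w ∈ (gwTree (shiftω [i] ω)).carrier} := by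
  have hE : {ω : List ℕ → ℕ | w ∈ (gwTree (shiftω [i] ω)).carrier} =
      ⋂ u : List ℕ, {ω : List ℕ → ℕ |
        u <+: w → ∀ h : u ≠ [], u.getLast h < ω ([i] ++ u.dropLast)} := by
    ext ω
    simp only [gwTree, shiftω, Set.mem_setOf_eq, Set.mem_iInter]
  rw [hE]
  refine MeasurableSet.iInter fun u => ?_
  by_cases hp : u <+: w
  · by_cases hn : u = []
    · convert MeasurableSet.univ
      ext ω; simp [hn]
    · have heq : {ω : List ℕ → ℕ |
          u <+: w → ∀ h : u ≠ [], u.getLast h < ω ([i] ++ u.dropLast)} =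
          (fun ω : List ℕ → ℕ => ω ([i] ++ u.dropLast)) ⁻¹' {n | u.getLast hn < n} := by
        ext ω
        simp only [Set.mem_setOf_eq, Set.mem_preimage]
        constructor
        · intro h; exact h hp hn
        · intro h _ _; exact h
      rw [heq]
      exact measurable_pi_apply _ trivial
  · convert MeasurableSet.univ
    ext ω; simp [hp]

lemma E_subset (i s : ℕ) (g : Fin s → ℕ) :
    {ω : List ℕ → ℕ | List.ofFn g ∈ (gwTree (shiftω [i] ω)).carrier} ⊆
      {ω | ∀ j : Fin s, g j + 1 ≤ ω ([i] ++ (List.ofFn g).take j.1)} := by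
  intro ω hω j
  have htake : (List.ofFn g).take (j.1 + 1) = (List.ofFn g).take j.1 ++ [g j] := by
    rw [List.take_succ]
    congr 1
    rw [List.getElem?_eq_getElem (by simp [j.isLt])]
    simp
  have hpre : (List.ofFn g).take j.1 ++ [g j] <+: List.ofFn g :=
    htake ▸ List.take_prefix _ _
  have h := hω _ hpre (by simp)
  simp only [List.getLast_concat, List.dropLast_concat, shiftω] at h
  omega

lemma cylinder_bound (c : NNReal) (μ : Measure (List ℕ → ℕ))
    (hμ : IsPoissonProduct c μ) (s : ℕ) (v : Fin s → List ℕ)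
    (hv : Function.Injective v) (m : Fin s → ℕ) :
    μ {ω | ∀ j, m j ≤ ω (v j)} ≤
      ∏ j, ∑' n : ℕ, (if m j ≤ n then (ProbabilityTheory.poissonPMF c n : ℝ≥0∞) else 0) := by
  have hcover : {ω : List ℕ → ℕ | ∀ j, m j ≤ ω (v j)} ⊆
      ⋃ g : Fin s → ℕ, {ω | (∀ j, m j ≤ g j) ∧ ∀ j, ω (v j) = g j} := by
    intro ω hω
    exact Set.mem_iUnion.2 ⟨fun j => ω (v j), hω, fun j => rfl⟩
  refine (measure_mono hcover).trans ((measure_iUnion_le _).trans ?_)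
  rw [← tsum_pi_prod s
    (fun j n => if m j ≤ n then (ProbabilityTheory.poissonPMF c n : ℝ≥0∞) else 0)]
  refine ENNReal.tsum_le_tsum fun g => ?_
  by_cases h : ∀ j, m j ≤ g j
  · have hset : {ω : List ℕ → ℕ | (∀ j, m j ≤ g j) ∧ ∀ j, ω (v j) = g j}
        = {ω | ∀ u ∈ Finset.image v Finset.univ, ω u = Function.extend v g (fun _ => 0) u} := by
      ext ω
      simp only [Set.mem_setOf_eq, Finset.mem_image, Finset.mem_univ, true_and]
      constructor
      · rintro ⟨-, h2⟩ u ⟨j, rfl⟩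
        rw [hv.extend_apply]; exact h2 j
      · intro h2
        refine ⟨h, fun j => ?_⟩
        have := h2 (v j) ⟨j, rfl⟩
        rwa [hv.extend_apply] at this
    rw [hset, hμ.2]
    rw [Finset.prod_image (fun a _ b _ hab => hv hab)]
    apply le_of_eq
    refine Finset.prod_congr rfl fun j _ => ?_
    rw [hv.extend_apply, if_pos (h j)]
  · have hset : {ω : List ℕ → ℕ | (∀ j, m j ≤ g j) ∧ ∀ j, ω (v j) = g j} = ∅ := by
      ext ω; simp only [Set.mem_setOf_eq, Set.mem_empty_iff_false, iff_false]
      rintro ⟨h1, -⟩; exact h h1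
    rw [hset, measure_empty]
    exact zero_le

end GWAux

namespace RTree

/-- **Lemma (expectation of `Y` on a rare event).**
Fix `c > 0` and a nonnegative integer `s`, and let `Y` be the sum of `t` independent
copies of `X(c,s)`, the number of generation-`s` nodes of the Galton–Watson tree `T_c`
(realized here as the numbers of generation-`s` descendants of `t` independent
Galton–Watson trees).  Let `K, γ > 0` and let `BAD` be any event with
`P[BAD] ≤ K·e^{-tγ}`.  Then there are positive constants `k'` and `κ` (depending on
`K`, `γ`, `c`, `s` but not on `t` or on the event) with
`E[Y · 1_BAD] ≤ k'·t·e^{-tκ}`. -/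
theorem expectation_on_bad_event (c : ℝ) (hc : 0 < c) (s : ℕ)
    (μ : Measure (List ℕ → ℕ)) (hμ : IsPoissonProduct c.toNNReal μ)
    (K γ : ℝ) (hK : 0 < K) (hγ : 0 < γ) :
    ∃ k' κ : ℝ, 0 < k' ∧ 0 < κ ∧ ∀ t : ℕ, 0 < t → ∀ BAD : Set (List ℕ → ℕ),
      μ BAD ≤ ENNReal.ofReal (K * Real.exp (-(t * γ))) →
      ∫⁻ ω in BAD, ENat.toENNReal (∑ i ∈ Finset.range t,
          {w ∈ (gwTree (shiftω [i] ω)).carrier | w.length = s}.encard) ∂μ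
        ≤ ENNReal.ofReal (k' * t * Real.exp (-(t * κ))) := by
  classical
  have hκ : (0:ℝ) < γ / 2 := by positivity
  refine ⟨K * s.factorial * ((γ/2)⁻¹)^s * Real.exp (γ/2)
      + s * ((Real.exp c * Real.exp c) * (c^2 * Real.exp (c * Real.exp (γ/2))))
        * (Real.exp c * (Real.exp c * c))^(s-1), γ/2, ?_, hκ, ?_⟩
  · have h1 : 0 < K * s.factorial * ((γ/2)⁻¹)^s * Real.exp (γ/2) := by positivity
    have h2 : 0 ≤ (s:ℝ) * ((Real.exp c * Real.exp c) * (c^2 * Real.exp (c * Real.exp (γ/2))))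
        * (Real.exp c * (Real.exp c * c))^(s-1) := by positivity
    linarith
  intro t ht BAD hBAD
  -- numeric bounds
  have hR1 : K * Real.exp (-(t*γ)) * (((t+1:ℕ):ℝ))^s
      ≤ (K * s.factorial * ((γ/2)⁻¹)^s * Real.exp (γ/2)) * Real.exp (-(t*(γ/2))) := by
    have hx : (0:ℝ) ≤ ((t:ℝ)+1) * (γ/2) := by positivity
    have h1 : (((t:ℝ)+1) * (γ/2))^s ≤ s.factorial * Real.exp (((t:ℝ)+1)*(γ/2)) :=
      GWAux.pow_le_fac_exp _ hx s
    have h2 : ((t:ℝ)+1)^s ≤ s.factorial * ((γ/2)⁻¹)^s * Real.exp (((t:ℝ)+1)*(γ/2)) := by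
      have hp : ((t:ℝ)+1)^s = (((t:ℝ)+1)*(γ/2))^s * ((γ/2)⁻¹)^s := by
        rw [← mul_pow]
        congr 1
        field_simp
      rw [hp]
      calc (((t:ℝ)+1)*(γ/2))^s * ((γ/2)⁻¹)^s
          ≤ (s.factorial * Real.exp (((t:ℝ)+1)*(γ/2))) * ((γ/2)⁻¹)^s :=
            mul_le_mul_of_nonneg_right h1 (by positivity)
        _ = s.factorial * ((γ/2)⁻¹)^s * Real.exp (((t:ℝ)+1)*(γ/2)) := by ring
    have hexp : Real.exp (((t:ℝ)+1)*(γ/2)) * Real.exp (-(t*γ))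
        = Real.exp (γ/2) * Real.exp (-(t*(γ/2))) := by
      rw [← Real.exp_add, ← Real.exp_add]
      congr 1
      ring
    calc K * Real.exp (-(t*γ)) * (((t+1:ℕ):ℝ))^s
        = K * ((t:ℝ)+1)^s * Real.exp (-(t*γ)) := by push_cast; ring
      _ ≤ (K * (s.factorial * ((γ/2)⁻¹)^s * Real.exp (((t:ℝ)+1)*(γ/2)))) * Real.exp (-(t*γ)) :=
          mul_le_mul_of_nonneg_right (mul_le_mul_of_nonneg_left h2 hK.le) (Real.exp_pos _).le
      _ = (K * s.factorial * ((γ/2)⁻¹)^s) * (Real.exp (((t:ℝ)+1)*(γ/2)) * Real.exp (-(t*γ))) := by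
          ring
      _ = (K * s.factorial * ((γ/2)⁻¹)^s) * (Real.exp (γ/2) * Real.exp (-(t*(γ/2)))) := by
          rw [hexp]
      _ = (K * s.factorial * ((γ/2)⁻¹)^s * Real.exp (γ/2)) * Real.exp (-(t*(γ/2))) := by ring
  have hR2 : Real.exp c * (Real.exp c * (c^(t+2) / (t+2).factorial))
      ≤ ((Real.exp c * Real.exp c) * (c^2 * Real.exp (c * Real.exp (γ/2))))
        * Real.exp (-(t*(γ/2))) := by
    have h1 : (c * Real.exp (γ/2))^t ≤ t.factorial * Real.exp (c * Real.exp (γ/2)) :=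
      GWAux.pow_le_fac_exp _ (by positivity) t
    have h2 : (c * Real.exp (γ/2))^t = c^t * Real.exp ((t:ℝ)*(γ/2)) := by
      rw [mul_pow, ← Real.exp_nat_mul]
    have h3 : c^t ≤ t.factorial * Real.exp (c * Real.exp (γ/2)) * Real.exp (-((t:ℝ)*(γ/2))) := by
      rw [h2] at h1
      calc c^t = c^t * Real.exp ((t:ℝ)*(γ/2)) * Real.exp (-((t:ℝ)*(γ/2))) := by
            rw [mul_assoc, ← Real.exp_add]
            simp
        _ ≤ _ := mul_le_mul_of_nonneg_right h1 (Real.exp_pos _).le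
    have h5 : c^(t+2) / (((t+2).factorial : ℝ))
        ≤ c^2 * (Real.exp (c * Real.exp (γ/2)) * Real.exp (-((t:ℝ)*(γ/2)))) := by
      have hfle : (t.factorial : ℝ) ≤ ((t+2).factorial : ℝ) := by
        exact_mod_cast Nat.factorial_le (by omega)
      have hfpos : (0:ℝ) < t.factorial := by positivity
      calc c^(t+2) / (((t+2).factorial : ℝ)) ≤ c^(t+2) / (t.factorial : ℝ) := by
            gcongr
        _ = c^2 * (c^t / t.factorial) := by rw [pow_add]; ring
        _ ≤ c^2 * (Real.exp (c * Real.exp (γ/2)) * Real.exp (-((t:ℝ)*(γ/2)))) := by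
            refine mul_le_mul_of_nonneg_left ?_ (by positivity)
            rw [div_le_iff₀ hfpos]
            calc c^t ≤ t.factorial * Real.exp (c * Real.exp (γ/2))
                  * Real.exp (-((t:ℝ)*(γ/2))) := h3
              _ = (Real.exp (c * Real.exp (γ/2)) * Real.exp (-((t:ℝ)*(γ/2)))) * t.factorial := by
                  ring
    calc Real.exp c * (Real.exp c * (c^(t+2) / (t+2).factorial))
        = (Real.exp c * Real.exp c) * (c^(t+2) / (t+2).factorial) := by ring
      _ ≤ (Real.exp c * Real.exp c)
            * (c^2 * (Real.exp (c * Real.exp (γ/2)) * Real.exp (-((t:ℝ)*(γ/2))))) :=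
          mul_le_mul_of_nonneg_left h5 (by positivity)
      _ = _ := by ring
  -- the family of events
  set A : ℕ → List ℕ → Set (List ℕ → ℕ) := fun i w =>
    if i < t ∧ w.length = s then {ω | w ∈ (gwTree (shiftω [i] ω)).carrier}
    else (∅ : Set (List ℕ → ℕ)) with hAdef
  have hAmeas : ∀ i w, MeasurableSet (A i w) := by
    intro i w
    simp only [hAdef]
    split_ifs
    · exact GWAux.measurable_E i w
    · exact MeasurableSet.empty
  have hcast : ∀ f : ℕ → ℕ∞, ENat.toENNReal (∑ i ∈ Finset.range t, f i)
      = ∑ i ∈ Finset.range t, ENat.toENNReal (f i) := by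
    intro f
    induction (Finset.range t) using Finset.induction with
    | empty => simp
    | insert _ _ h ih =>
      rw [Finset.sum_insert h, Finset.sum_insert h, ENat.toENNReal_add, ih]
  have hpoint : ∀ ω : List ℕ → ℕ,
      ENat.toENNReal (∑ i ∈ Finset.range t,
        {w ∈ (gwTree (shiftω [i] ω)).carrier | w.length = s}.encard)
      = ∑' p : ℕ × List ℕ, Set.indicator (A p.1 p.2) 1 ω := by
    intro ω
    refine Eq.symm ?_
    calc ∑' p : ℕ × List ℕ, Set.indicator (A p.1 p.2) 1 ω
        = ∑' i : ℕ, ∑' w : List ℕ, Set.indicator (A i w) 1 ω := ENNReal.tsum_prod'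
      _ = ∑ i ∈ Finset.range t, ∑' w : List ℕ, Set.indicator (A i w) 1 ω := by
          refine tsum_eq_sum fun i hi => ?_
          have hit : ¬ i < t := by simpa using hi
          have hAe : ∀ w : List ℕ, A i w = (∅ : Set (List ℕ → ℕ)) := fun w => by
            simp only [hAdef]
            exact if_neg (by tauto)
          simp [hAe]
      _ = ∑ i ∈ Finset.range t, ENat.toENNReal
            ({w ∈ (gwTree (shiftω [i] ω)).carrier | w.length = s}.encard) := by
          refine Finset.sum_congr rfl fun i hi => ?_
          have hit : i < t := Finset.mem_range.1 hi
          calc ∑' w : List ℕ, Set.indicator (A i w) 1 ω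
              = ∑' w : List ℕ, Set.indicator
                  {w' ∈ (gwTree (shiftω [i] ω)).carrier | w'.length = s} 1 w := by
                refine tsum_congr fun w => ?_
                rw [Set.indicator_apply, Set.indicator_apply]
                have hmem : ω ∈ A i w ↔
                    w ∈ {w' ∈ (gwTree (shiftω [i] ω)).carrier | w'.length = s} := by
                  by_cases h1 : w.length = s
                  · simp [hAdef, hit, h1, Set.mem_sep_iff]
                  · simp [hAdef, h1, Set.mem_sep_iff]
                exact if_congr hmem rfl rfl
            _ = ENat.toENNReal
                  ({w' ∈ (gwTree (shiftω [i] ω)).carrier | w'.length = s}.encard) := by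
                rw [← tsum_subtype]
                exact ENNReal.tsum_set_one _
      _ = ENat.toENNReal (∑ i ∈ Finset.range t,
            {w ∈ (gwTree (shiftω [i] ω)).carrier | w.length = s}.encard) := (hcast _).symm
  have hperi : ∀ i ∈ Finset.range t, (∑' w : List ℕ, μ (A i w ∩ BAD))
      ≤ ENNReal.ofReal ((K * s.factorial * ((γ/2)⁻¹)^s * Real.exp (γ/2)
        + s * ((Real.exp c * Real.exp c) * (c^2 * Real.exp (c * Real.exp (γ/2))))
          * (Real.exp c * (Real.exp c * c))^(s-1)) * Real.exp (-(t*(γ/2)))) := by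
    intro i hi
    have hit : i < t := Finset.mem_range.1 hi
    have hre : (∑' w : List ℕ, μ (A i w ∩ BAD))
        = ∑' g : Fin s → ℕ, μ (A i (List.ofFn g) ∩ BAD) := by
      refine (List.ofFn_injective.tsum_eq ?_).symm
      intro w hw
      by_contra hr
      have hlen : w.length ≠ s := by
        intro hl
        refine hr ⟨fun j => w.get ⟨j.1, hl ▸ j.isLt⟩, ?_⟩
        refine List.ext_getElem (by simp [hl]) ?_
        intro k h1 h2
        simp [List.getElem_ofFn, List.get_eq_getElem]
      have hAe : A i w = ∅ := by
        simp only [hAdef]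
        exact if_neg (by tauto)
      simp [Function.mem_support, hAe] at hw
    have hg : ∀ g : Fin s → ℕ, μ (A i (List.ofFn g) ∩ BAD)
        ≤ min (∏ j, GWAux.q c (g j)) (ENNReal.ofReal (K * Real.exp (-(t*γ)))) := by
      intro g
      refine le_min ?_ ((measure_mono Set.inter_subset_right).trans hBAD)
      have hAeq : A i (List.ofFn g)
          = {ω : List ℕ → ℕ | List.ofFn g ∈ (gwTree (shiftω [i] ω)).carrier} := by
        simp only [hAdef]
        exact if_pos ⟨hit, List.length_ofFn⟩
      have hvinj : Function.Injective (fun j : Fin s => [i] ++ (List.ofFn g).take j.1) := by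
        intro a b hab
        have h := congrArg List.length hab
        simp only [List.length_append, List.length_take, List.length_ofFn,
          List.length_cons, List.length_nil] at h
        have ha := a.isLt
        have hb := b.isLt
        exact Fin.ext (by omega)
      have hsub : A i (List.ofFn g) ∩ BAD ⊆
          {ω : List ℕ → ℕ | ∀ j : Fin s, g j + 1 ≤ ω ([i] ++ (List.ofFn g).take j.1)} := by
        intro ω hω
        have h1 : ω ∈ A i (List.ofFn g) := hω.1
        rw [hAeq] at h1
        exact GWAux.E_subset i s g h1
      have hcyl := GWAux.cylinder_bound c.toNNReal μ hμ s
        (fun j : Fin s => [i] ++ (List.ofFn g).take j.1) hvinj (fun j => g j + 1)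
      have hcyl' : μ {ω : List ℕ → ℕ | ∀ j : Fin s, g j + 1 ≤ ω ([i] ++ (List.ofFn g).take j.1)}
          ≤ ∏ j, GWAux.q c (g j) := by
        refine hcyl.trans (le_of_eq ?_)
        refine Finset.prod_congr rfl fun j _ => ?_
        rfl
      exact (measure_mono hsub).trans hcyl'
    have hb1 : ENNReal.ofReal (K * Real.exp (-(t*γ))) * (((t+1:ℕ)) : ENNReal)^s
        ≤ ENNReal.ofReal ((K * s.factorial * ((γ/2)⁻¹)^s * Real.exp (γ/2))
            * Real.exp (-(t*(γ/2)))) := by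
      rw [← ENNReal.ofReal_natCast (t+1), ← ENNReal.ofReal_pow (by positivity),
        ← ENNReal.ofReal_mul (by positivity)]
      exact ENNReal.ofReal_le_ofReal hR1
    have hb2 : (s : ENNReal) * ((∑' a : ℕ, if t + 1 ≤ a then GWAux.q c a else 0)
          * (∑' a : ℕ, GWAux.q c a)^(s-1))
        ≤ ENNReal.ofReal ((s * ((Real.exp c * Real.exp c)
            * (c^2 * Real.exp (c * Real.exp (γ/2))))
            * (Real.exp c * (Real.exp c * c))^(s-1)) * Real.exp (-(t*(γ/2)))) := by
      have ht1 := GWAux.q_tail_le c hc t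
      have ht2 := GWAux.q_sum_le c hc
      calc (s : ENNReal) * ((∑' a : ℕ, if t + 1 ≤ a then GWAux.q c a else 0)
              * (∑' a : ℕ, GWAux.q c a)^(s-1))
          ≤ (s : ENNReal) * (ENNReal.ofReal (Real.exp c * (Real.exp c
              * (c^(t+2) / (t+2).factorial)))
              * (ENNReal.ofReal (Real.exp c * (Real.exp c * c)))^(s-1)) := by
            gcongr
        _ = ENNReal.ofReal ((s:ℝ) * ((Real.exp c * (Real.exp c
              * (c^(t+2) / (t+2).factorial)))
              * (Real.exp c * (Real.exp c * c))^(s-1))) := by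
            rw [← ENNReal.ofReal_pow (by positivity),
              ← ENNReal.ofReal_mul (by positivity),
              ← ENNReal.ofReal_natCast s,
              ← ENNReal.ofReal_mul (by positivity)]
        _ ≤ _ := by
            refine ENNReal.ofReal_le_ofReal ?_
            have hmul := mul_le_mul_of_nonneg_left hR2
              (by positivity : (0:ℝ) ≤ (s:ℝ) * (Real.exp c * (Real.exp c * c))^(s-1))
            calc (s:ℝ) * ((Real.exp c * (Real.exp c * (c^(t+2) / (t+2).factorial)))
                  * (Real.exp c * (Real.exp c * c))^(s-1))
                = ((s:ℝ) * (Real.exp c * (Real.exp c * c))^(s-1))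
                    * (Real.exp c * (Real.exp c * (c^(t+2) / (t+2).factorial))) := by ring
              _ ≤ ((s:ℝ) * (Real.exp c * (Real.exp c * c))^(s-1))
                    * (((Real.exp c * Real.exp c) * (c^2 * Real.exp (c * Real.exp (γ/2))))
                      * Real.exp (-(t*(γ/2)))) := hmul
              _ = _ := by ring
    calc (∑' w : List ℕ, μ (A i w ∩ BAD))
        = ∑' g : Fin s → ℕ, μ (A i (List.ofFn g) ∩ BAD) := hre
      _ ≤ ∑' g : Fin s → ℕ, min (∏ j, GWAux.q c (g j))
            (ENNReal.ofReal (K * Real.exp (-(t*γ)))) := ENNReal.tsum_le_tsum hg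
      _ ≤ ENNReal.ofReal (K * Real.exp (-(t*γ))) * (((t+1:ℕ)) : ENNReal)^s
            + (s : ENNReal) * ((∑' a : ℕ, if t + 1 ≤ a then GWAux.q c a else 0)
              * (∑' a : ℕ, GWAux.q c a)^(s-1)) := GWAux.min_sum_le c s t _
      _ ≤ ENNReal.ofReal ((K * s.factorial * ((γ/2)⁻¹)^s * Real.exp (γ/2))
              * Real.exp (-(t*(γ/2))))
            + ENNReal.ofReal ((s * ((Real.exp c * Real.exp c)
              * (c^2 * Real.exp (c * Real.exp (γ/2))))
              * (Real.exp c * (Real.exp c * c))^(s-1)) * Real.exp (-(t*(γ/2)))) :=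
          add_le_add hb1 hb2
      _ = _ := by
          rw [← ENNReal.ofReal_add (by positivity) (by positivity)]
          congr 1
          ring
  calc ∫⁻ ω in BAD, ENat.toENNReal (∑ i ∈ Finset.range t,
          {w ∈ (gwTree (shiftω [i] ω)).carrier | w.length = s}.encard) ∂μ
      = ∫⁻ ω in BAD, ∑' p : ℕ × List ℕ, Set.indicator (A p.1 p.2) 1 ω ∂μ :=
        lintegral_congr hpoint
    _ = ∑' p : ℕ × List ℕ, ∫⁻ ω in BAD, Set.indicator (A p.1 p.2) 1 ω ∂μ :=
        lintegral_tsum fun p => (measurable_one.indicator (hAmeas p.1 p.2)).aemeasurable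
    _ = ∑' p : ℕ × List ℕ, μ (A p.1 p.2 ∩ BAD) := by
        refine tsum_congr fun p => ?_
        rw [lintegral_indicator_one (hAmeas p.1 p.2), Measure.restrict_apply (hAmeas p.1 p.2)]
    _ = ∑' i : ℕ, ∑' w : List ℕ, μ (A i w ∩ BAD) := ENNReal.tsum_prod'
    _ = ∑ i ∈ Finset.range t, ∑' w : List ℕ, μ (A i w ∩ BAD) := by
        refine tsum_eq_sum fun i hi => ?_
        have hit : ¬ i < t := by simpa using hi
        have hAe : ∀ w : List ℕ, A i w = (∅ : Set (List ℕ → ℕ)) := fun w => by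
          simp only [hAdef]
          exact if_neg (by tauto)
        simp [hAe]
    _ ≤ ∑ _i ∈ Finset.range t, ENNReal.ofReal ((K * s.factorial * ((γ/2)⁻¹)^s * Real.exp (γ/2)
          + s * ((Real.exp c * Real.exp c) * (c^2 * Real.exp (c * Real.exp (γ/2))))
            * (Real.exp c * (Real.exp c * c))^(s-1)) * Real.exp (-(t*(γ/2)))) :=
        Finset.sum_le_sum hperi
    _ = (t : ENNReal) * ENNReal.ofReal ((K * s.factorial * ((γ/2)⁻¹)^s * Real.exp (γ/2)
          + s * ((Real.exp c * Real.exp c) * (c^2 * Real.exp (c * Real.exp (γ/2))))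
            * (Real.exp c * (Real.exp c * c))^(s-1)) * Real.exp (-(t*(γ/2)))) := by
        rw [Finset.sum_const, Finset.card_range, nsmul_eq_mul]
    _ = ENNReal.ofReal ((K * s.factorial * ((γ/2)⁻¹)^s * Real.exp (γ/2)
          + s * ((Real.exp c * Real.exp c) * (c^2 * Real.exp (c * Real.exp (γ/2))))
            * (Real.exp c * (Real.exp c * c))^(s-1)) * t * Real.exp (-(t*(γ/2)))) := by
        rw [← ENNReal.ofReal_natCast t, ← ENNReal.ofReal_mul (Nat.cast_nonneg t)]
        congr 1
        ring

end RTree
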